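/- Let (x,y) be any square of the m×n grid and let w_{x,y} ∈ S_{m+n} be the reading word of the set of all squares (a,b) with a ≥ x and b ≤ y. Then w_{x,y}^{-1}(j) = j for every j ∈ {1,...,x-1} and w_{x,y}^{-1}(j) = j + y - m for every j ∈ {x,...,m}; consequently the image of {1,...,m} under w_{x,y}^{-1} equals {1,...,x-1} ∪ {x+y-m,...,y}. -/

import Mathlib

/-- The transposition `s_{a+b-m-1} = (a+b-m-1, a+b-m)` assigned to the grid square `(a,b)`. -/
def sqPerm (m : ℕ) (p : ℕ × ℕ) : Equiv.Perm ℕ :=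
  Equiv.swap (p.1 + p.2 - m - 1) (p.1 + p.2 - m)

/-- The reading word of the set of grid squares satisfying `P`: rows are read from the
top (`a = m`) down to the bottom (`a = 1`), and within each row columns are read from the
left (`b = m+1`) to the right (`b = m+n`); factors are multiplied so that the last factor
in reading order is applied first. -/
def readingWord (m n : ℕ) (P : ℕ × ℕ → Bool) : Equiv.Perm ℕ :=
  ((List.range m).map fun i =>
    (((List.range n).map fun j =>
      if P (m - i, m + 1 + j) then sqPerm m (m - i, m + 1 + j) else 1)).prod).prod

/-- `(a,b)` is a square of the `m × n` grid: `1 ≤ a ≤ m`, `m+1 ≤ b ≤ m+n`. -/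
def InGrid (m n : ℕ) (p : ℕ × ℕ) : Prop :=
  1 ≤ p.1 ∧ p.1 ≤ m ∧ m + 1 ≤ p.2 ∧ p.2 ≤ m + n

/-- A colouring (`true` = black, `false` = white) is a Cauchon diagram if for every black
square `(a,b)`, either every square `(a,b')` with `b' < b` is black, or every square
`(a',b)` with `a' > a` is black. -/
def IsCauchon (m n : ℕ) (col : ℕ × ℕ → Bool) : Prop :=
  ∀ a b, InGrid m n (a, b) → col (a, b) = true →
    (∀ b', m + 1 ≤ b' → b' < b → col (a, b') = true) ∨
    (∀ a', a < a' → a' ≤ m → col (a', b) = true)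

/-- The permutation associated to a colouring: the reading word of its set of black squares. -/
def assocPerm (m n : ℕ) (col : ℕ × ℕ → Bool) : Equiv.Perm ℕ :=
  readingWord m n col

/-- `v_{x,y}`: the reading word of the black squares `(a,b)` with `a ≥ x` and `b ≤ y`. -/
def vAt (m n : ℕ) (col : ℕ × ℕ → Bool) (x y : ℕ) : Equiv.Perm ℕ :=
  readingWord m n fun p => col p && decide (x ≤ p.1) && decide (p.2 ≤ y)

/-- `w_{x,y}`: the reading word of all grid squares `(a,b)` with `a ≥ x` and `b ≤ y`. -/
def wAt (m n x y : ℕ) : Equiv.Perm ℕ :=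
  readingWord m n fun p => decide (x ≤ p.1) && decide (p.2 ≤ y)

/-- Box `k` on the south-east border: `(1, m+k)` if `k ≤ n`, and `(k-n+1, m+n)` otherwise. -/
def boxSE (m n k : ℕ) : ℕ × ℕ :=
  if k ≤ n then (1, m + k) else (k - n + 1, m + n)

/-- `(X 1, Y 1), ..., (X t, Y t)` is the chain rooted at the square `(x,y)` of the colouring
`col` (with `t = 0` for the empty chain). -/
def IsChainRootedAt (m n : ℕ) (col : ℕ × ℕ → Bool) (x y : ℕ)
    (t : ℕ) (X Y : ℕ → ℕ) : Prop :=
  -- every member of the chain is a white square of the grid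
  (∀ i, 1 ≤ i → i ≤ t → InGrid m n (X i, Y i) ∧ col (X i, Y i) = false) ∧
  -- if `(x,y)` is white, the chain starts at `(x,y)`
  (col (x, y) = false → 1 ≤ t ∧ X 1 = x ∧ Y 1 = y) ∧
  -- if `(x,y)` is black and the chain is nonempty, it starts at the white square
  -- weakly north-west of `(x,y)` nearest to it
  (col (x, y) = true → 1 ≤ t →
    x ≤ X 1 ∧ Y 1 ≤ y ∧
      ∀ a b, InGrid m n (a, b) → col (a, b) = false → x ≤ a → b ≤ y →
        X 1 ≤ a ∧ b ≤ Y 1) ∧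
  -- the chain is empty only when there is no white square weakly north-west of `(x,y)`
  (t = 0 → ∀ a b, InGrid m n (a, b) → col (a, b) = false → x ≤ a → b ≤ y → False) ∧
  -- inductive step: each next member is the nearest white square strictly north-west
  (∀ i, 1 ≤ i → i < t →
    X i < X (i + 1) ∧ Y (i + 1) < Y i ∧
      ∀ a b, InGrid m n (a, b) → col (a, b) = false → X i < a → b < Y i →
        X (i + 1) ≤ a ∧ b ≤ Y (i + 1)) ∧
  -- termination: no white square strictly north-west of the last member
  (1 ≤ t → ∀ a b, InGrid m n (a, b) → col (a, b) = false → X t < a → b < Y t → False)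

/-- Staircase product `s_c s_{c+1} ⋯ s_{c+k-1}` (last factor applied first). -/
def stair (c k : ℕ) : Equiv.Perm ℕ :=
  ((List.range k).map fun j => Equiv.swap (c + j) (c + j + 1)).prod

lemma stair_apply (c k v : ℕ) :
    stair c k v = if c ≤ v ∧ v < c + k then v + 1
      else if v = c + k ∧ 0 < k then c else v := by
  induction k generalizing v with
  | zero =>
    simp only [stair, List.range_zero, List.map_nil, List.prod_nil, Equiv.Perm.one_apply]
    split_ifs <;> omega
  | succ k ih =>
    have hs : stair c (k + 1) = stair c k * Equiv.swap (c + k) (c + k + 1) := by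
      simp [stair, List.range_succ]
    rw [hs, Equiv.Perm.mul_apply]
    rcases eq_or_ne v (c + k) with h | h
    · rw [h, Equiv.swap_apply_left, ih]
      split_ifs <;> omega
    rcases eq_or_ne v (c + k + 1) with h' | h'
    · rw [h', Equiv.swap_apply_right, ih]
      split_ifs <;> omega
    · rw [Equiv.swap_apply_of_ne_of_ne h h', ih]
      split_ifs <;> omega

lemma row_eq (m n x y a : ℕ) (hy1 : m + 1 ≤ y) (hyn : y ≤ m + n) :
    (((List.range n).map fun j =>
      if (decide (x ≤ a) && decide (m + 1 + j ≤ y)) = true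
        then sqPerm m (a, m + 1 + j) else 1)).prod
      = if x ≤ a then stair a (y - m) else 1 := by
  by_cases hxa : x ≤ a
  · rw [if_pos hxa]
    have hk : y - m + (n - (y - m)) = n := by omega
    rw [← hk, List.range_add, List.map_append, List.prod_append]
    have h1 : ((List.range (y - m)).map fun j =>
        if (decide (x ≤ a) && decide (m + 1 + j ≤ y)) = true
          then sqPerm m (a, m + 1 + j) else 1)
        = (List.range (y - m)).map fun j => Equiv.swap (a + j) (a + j + 1) := by
      apply List.map_congr_left
      intro j hj
      rw [List.mem_range] at hj
      have hcond : m + 1 + j ≤ y := by omega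
      have hc : (decide (x ≤ a) && decide (m + 1 + j ≤ y)) = true := by
        simp [hxa, hcond]
      rw [if_pos hc]
      show Equiv.swap (a + (m + 1 + j) - m - 1) (a + (m + 1 + j) - m) = _
      congr 1 <;> omega
    have h2 : (((List.range (n - (y - m))).map fun j => y - m + j).map fun j =>
        if (decide (x ≤ a) && decide (m + 1 + j ≤ y)) = true
          then sqPerm m (a, m + 1 + j) else 1).prod = 1 := by
      apply List.prod_eq_one
      intro z hz
      simp only [List.mem_map, List.mem_range] at hz
      obtain ⟨j, ⟨j', hj', rfl⟩, rfl⟩ := hz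
      have : ¬ (m + 1 + (y - m + j') ≤ y) := by omega
      simp [this]
    rw [h1, h2, mul_one, stair]
  · rw [if_neg hxa]
    have h1 : ((List.range n).map fun j =>
        if (decide (x ≤ a) && decide (m + 1 + j ≤ y)) = true
          then sqPerm m (a, m + 1 + j) else 1)
        = (List.range n).map fun _ => (1 : Equiv.Perm ℕ) := by
      apply List.map_congr_left
      intro j _
      simp [hxa]
    rw [h1]
    simp

lemma wAt_eq (m n x y : ℕ) (hy1 : m + 1 ≤ y) (hyn : y ≤ m + n) :
    wAt m n x y = ((List.range m).map fun i =>
      if x ≤ m - i then stair (m - i) (y - m) else 1).prod := by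
  unfold wAt readingWord
  congr 1
  apply List.map_congr_left
  intro i _
  exact row_eq m n x y (m - i) hy1 hyn

lemma prodAux (m x y : ℕ) (hx1 : 1 ≤ x) (hxm : x ≤ m) (hy1 : m + 1 ≤ y)
    (t : ℕ) (ht : t ≤ m) (v : ℕ) :
    (((List.range t).map fun i =>
      if x ≤ m - i then stair (m - i) (y - m) else 1).prod) v =
    if v ≤ max (m - t) (x - 1) then v
    else if v ≤ max (m - t) (x - 1) + (y - m) then v + (m - max (m - t) (x - 1))
    else if v ≤ m + (y - m) then v - (y - m) else v := by
  induction t generalizing v with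
  | zero =>
    simp only [List.range_zero, List.map_nil, List.prod_nil, Equiv.Perm.one_apply]
    split_ifs <;> omega
  | succ t ih =>
    have hs : ((List.range (t + 1)).map fun i =>
        if x ≤ m - i then stair (m - i) (y - m) else 1).prod
        = ((List.range t).map fun i =>
          if x ≤ m - i then stair (m - i) (y - m) else 1).prod *
          (if x ≤ m - t then stair (m - t) (y - m) else 1) := by
      rw [List.range_succ, List.map_append, List.prod_append]
      simp
    rw [hs, Equiv.Perm.mul_apply]
    by_cases hxa : x ≤ m - t
    · rw [if_pos hxa, ih (by omega) (stair (m - t) (y - m) v), stair_apply]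
      split_ifs <;> omega
    · rw [if_neg hxa, Equiv.Perm.one_apply, ih (by omega) v]
      split_ifs <;> omega

/-- For any grid square `(x,y)`, the permutation `w_{x,y}⁻¹` fixes `{1,...,x-1}`, maps
`j ↦ j + y - m` for `j ∈ {x,...,m}`, and consequently the image of `{1,...,m}` under
`w_{x,y}⁻¹` is `{1,...,x-1} ∪ {x+y-m,...,y}`. -/
theorem wAt_inv_apply (m n x y : ℕ) (hm : 2 ≤ m) (hn : 2 ≤ n)
    (hx1 : 1 ≤ x) (hxm : x ≤ m) (hy1 : m + 1 ≤ y) (hyn : y ≤ m + n) :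
    (∀ j, 1 ≤ j → j ≤ x - 1 → (wAt m n x y)⁻¹ j = j) ∧
    (∀ j, x ≤ j → j ≤ m → (wAt m n x y)⁻¹ j = j + y - m) ∧
    Finset.image (fun j => (wAt m n x y)⁻¹ j) (Finset.Icc 1 m) =
      Finset.Icc 1 (x - 1) ∪ Finset.Icc (x + y - m) y := by
  have hw : ∀ v, wAt m n x y v =
      (if v ≤ x - 1 then v
        else if v ≤ x - 1 + (y - m) then v + (m - (x - 1))
        else if v ≤ m + (y - m) then v - (y - m) else v) := by
    intro v
    rw [wAt_eq m n x y hy1 hyn, prodAux m x y hx1 hxm hy1 m le_rfl v]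
    have : m - m = 0 := by omega
    rw [this]
    split_ifs <;> omega
  have h1 : ∀ j, 1 ≤ j → j ≤ x - 1 → (wAt m n x y)⁻¹ j = j := by
    intro j _ hj
    have hfix : wAt m n x y j = j := by rw [hw j, if_pos hj]
    calc (wAt m n x y)⁻¹ j = (wAt m n x y)⁻¹ (wAt m n x y j) := by rw [hfix]
      _ = j := Equiv.symm_apply_apply _ _
  have h2 : ∀ j, x ≤ j → j ≤ m → (wAt m n x y)⁻¹ j = j + y - m := by
    intro j hxj hjm
    have he : j + y - m = j + (y - m) := by omega
    have hfix : wAt m n x y (j + y - m) = j := by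
      rw [he, hw]
      split_ifs <;> omega
    calc (wAt m n x y)⁻¹ j = (wAt m n x y)⁻¹ (wAt m n x y (j + y - m)) := by rw [hfix]
      _ = j + y - m := Equiv.symm_apply_apply _ _
  refine ⟨h1, h2, ?_⟩
  ext t
  simp only [Finset.mem_image, Finset.mem_union, Finset.mem_Icc]
  constructor
  · rintro ⟨j, ⟨hj1, hj2⟩, rfl⟩
    by_cases hj : j ≤ x - 1
    · left; rw [h1 j hj1 hj]; exact ⟨hj1, hj⟩
    · right
      have hxj : x ≤ j := by omega
      rw [h2 j hxj hj2]
      omega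
  · rintro (⟨ht1, ht2⟩ | ⟨ht1, ht2⟩)
    · exact ⟨t, ⟨ht1, by omega⟩, h1 t ht1 ht2⟩
    · refine ⟨t + m - y, ⟨by omega, by omega⟩, ?_⟩
      rw [h2 (t + m - y) (by omega) (by omega)]
      omega
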